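/- If neither of two sequences A and B (with |A| + |B| = t) contains a repeated character, then the number of distinct longest common subsequences of A and B is at most 3^((⌊t/2⌋ - 2z)/3) · 2^z, where z = (-⌊t/2⌋) mod 3. -/

import Mathlib

open List

/-- `C` is a longest common subsequence of `A` and `B`. -/
def IsLCS {α : Type*} (A B C : List α) : Prop :=
  C.Sublist A ∧ C.Sublist B ∧ ∀ D : List α, D.Sublist A → D.Sublist B → D.length ≤ C.length

namespace LCS5

/-! ### Arithmetic part: the maximal product function -/

def fmax : ℕ → ℕ
  | 0 => 1
  | 1 => 1
  | 2 => 2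
  | 3 => 3
  | 4 => 4
  | (n+5) => 3 * fmax (n+2)

lemma fmax_add_three (n : ℕ) : fmax (n + 2 + 3) = 3 * fmax (n + 2) := by
  show fmax (n + 5) = _; rfl

lemma fmax_le_succ (n : ℕ) : fmax n ≤ fmax (n+1) := by
  induction n using Nat.strong_induction_on with
  | _ n ih =>
    match n with
    | 0 => decide
    | 1 => decide
    | 2 => decide
    | 3 => decide
    | 4 => decide
    | (n+5) =>
      have h1 : fmax (n + 5) = 3 * fmax (n + 2) := rfl
      have h2 : fmax (n + 6) = 3 * fmax (n + 3) := rfl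
      rw [h1, h2]
      exact Nat.mul_le_mul_left 3 (ih (n+2) (by omega))

lemma fmax_mono : Monotone fmax := monotone_nat_of_le_succ fmax_le_succ

lemma two_mul_fmax_le (n : ℕ) : 2 * fmax n ≤ fmax (n + 2) := by
  induction n using Nat.strong_induction_on with
  | _ n ih =>
    match n with
    | 0 => decide
    | 1 => decide
    | 2 => decide
    | 3 => decide
    | 4 => decide
    | (n+5) =>
      have h1 : fmax (n + 5) = 3 * fmax (n + 2) := rfl
      have h2 : fmax (n + 7) = 3 * fmax (n + 4) := rfl
      rw [h1, h2, ← Nat.mul_assoc, Nat.mul_comm 2 3, Nat.mul_assoc]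
      exact Nat.mul_le_mul_left 3 (ih (n+2) (by omega))

lemma three_mul_fmax_le (n : ℕ) : 3 * fmax n ≤ fmax (n + 3) := by
  match n with
  | 0 => decide
  | 1 => decide
  | (n+2) => rw [fmax_add_three]

lemma mul_fmax_le (k : ℕ) : ∀ m : ℕ, 1 ≤ k → k * fmax m ≤ fmax (m + k) := by
  induction k using Nat.strong_induction_on with
  | _ k ih =>
    intro m hk
    match k with
    | 1 => simpa using fmax_le_succ m
    | 2 => exact two_mul_fmax_le m
    | 3 => exact three_mul_fmax_le m
    | (k+4) =>
      have h1 : k + 4 ≤ 2 * (k + 2) := by omega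
      calc (k+4) * fmax m ≤ 2 * ((k+2) * fmax m) := by
            rw [← Nat.mul_assoc]; exact Nat.mul_le_mul_right _ h1
        _ ≤ 2 * fmax (m + (k+2)) := Nat.mul_le_mul_left 2 (ih (k+2) (by omega) m (by omega))
        _ ≤ fmax (m + (k+2) + 2) := two_mul_fmax_le _
        _ = fmax (m + (k+4)) := by ring_nf

lemma prod_le_fmax {ι : Type*} (s : Finset ι) (g : ι → ℕ) (hg : ∀ i ∈ s, 1 ≤ g i) :
    ∏ i ∈ s, g i ≤ fmax (∑ i ∈ s, g i) := by
  classical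
  induction s using Finset.cons_induction with
  | empty => simp [fmax]
  | cons a s ha ih =>
    rw [Finset.prod_cons, Finset.sum_cons]
    calc g a * ∏ i ∈ s, g i ≤ g a * fmax (∑ i ∈ s, g i) :=
          Nat.mul_le_mul_left _ (ih (fun i hi => hg i (Finset.mem_cons_of_mem hi)))
      _ ≤ fmax (∑ i ∈ s, g i + g a) := mul_fmax_le _ _ (hg a (Finset.mem_cons_self a s))
      _ = fmax (g a + ∑ i ∈ s, g i) := by rw [Nat.add_comm]

lemma fmax_le_bound (n : ℕ) :
    fmax n ≤ 3 ^ ((n - 2 * ((3 - n % 3) % 3)) / 3) * 2 ^ ((3 - n % 3) % 3) := by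
  induction n using Nat.strong_induction_on with
  | _ n ih =>
    match n with
    | 0 => decide
    | 1 => decide
    | 2 => decide
    | 3 => decide
    | 4 => decide
    | (m+5) =>
      have h1 : fmax (m + 5) = 3 * fmax (m + 2) := rfl
      have hz : (3 - (m+5) % 3) % 3 = (3 - (m+2) % 3) % 3 := by omega
      set z := (3 - (m+2) % 3) % 3 with hzdef
      have hdiv : (m + 5 - 2 * z) / 3 = (m + 2 - 2 * z) / 3 + 1 := by omega
      rw [h1, hz, hdiv, pow_succ]
      calc 3 * fmax (m+2) ≤ 3 * (3 ^ ((m + 2 - 2*z)/3) * 2 ^ z) :=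
            Nat.mul_le_mul_left 3 (ih (m+2) (by omega))
        _ = 3 ^ ((m + 2 - 2*z)/3) * 3 * 2 ^ z := by ring
      
/-! ### List part -/

variable {α : Type*}

lemma mem_of_getLast? {l : List α} {x : α} (h : l.getLast? = some x) : x ∈ l := by
  have := dropLast_append_getLast? x h
  rw [← this]
  simp

lemma glue {A D C₂ : List α} {x : α} (hA : A.Nodup) (hD : D.Sublist A)
    (hx : D.getLast? = some x) (h2 : (x :: C₂).Sublist A) : (D ++ C₂).Sublist A := by
  obtain ⟨P, Q, hPQ, hxP, hC₂Q⟩ := append_sublist_iff.1 (show ([x] ++ C₂).Sublist A from h2)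
  obtain ⟨P₁, P₂, rfl⟩ := append_of_mem (singleton_sublist.1 hxP)
  subst hPQ
  rw [append_assoc, cons_append] at hA hD ⊢
  set A₂ := P₂ ++ Q with hA₂
  have hxA₂ : x ∉ P₁ ∧ x ∉ A₂ := by
    rw [nodup_append] at hA
    exact ⟨fun hmem => hA.2.2 x hmem x mem_cons_self rfl, (nodup_cons.mp hA.2.1).1⟩
  have hC₂A₂ : C₂.Sublist A₂ := hC₂Q.trans (sublist_append_right _ _)
  obtain ⟨l₁, l₂, hDeq, hl₁, hl₂⟩ := sublist_append_iff.1 hD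
  subst hDeq
  have hl₂ne : l₂ ≠ [] := by
    rintro rfl
    exact hxA₂.1 (hl₁.subset (by simpa using mem_of_getLast? hx))
  have hl₂last : l₂.getLast? = some x := by
    rw [getLast?_append] at hx
    rcases h : l₂.getLast? with _ | y
    · exact absurd (getLast?_eq_none_iff.1 h) hl₂ne
    · rw [h] at hx; simpa using hx
  have hl₂eq : l₂ = [x] := by
    rcases sublist_cons_iff.1 hl₂ with h | ⟨r, rfl, hr⟩
    · exact absurd (h.subset (mem_of_getLast? hl₂last)) hxA₂.2
    · rcases r with _ | ⟨y, r⟩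
      · rfl
      · exfalso
        have : (y :: r).getLast? = some x := by
          rw [getLast?_cons_cons] at hl₂last; exact hl₂last
        exact hxA₂.2 (hr.subset (mem_of_getLast? this))
  subst hl₂eq
  rw [append_assoc, singleton_append]
  exact hl₁.append ((hC₂A₂).cons₂ x)

/-- The level of `x`: the largest length of a common subsequence of `A` and `B`
ending with `x`. -/
noncomputable def lvl (A B : List α) (x : α) : ℕ :=
  sSup {n | ∃ D : List α, D.Sublist A ∧ D.Sublist B ∧ D.getLast? = some x ∧ D.length = n}

lemma lvl_bddAbove (A B : List α) (x : α) :
    BddAbove {n | ∃ D : List α, D.Sublist A ∧ D.Sublist B ∧ D.getLast? = some x ∧ D.length = n} :=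
  ⟨A.length, fun _ ⟨_, hDA, _, _, hL⟩ => hL ▸ hDA.length_le⟩

lemma le_lvl {A B C : List α} (hCA : C.Sublist A) (hCB : C.Sublist B) {i : ℕ}
    (hi : i < C.length) : i + 1 ≤ lvl A B (C[i]) := by
  apply le_csSup (lvl_bddAbove A B _)
  refine ⟨C.take (i+1), (take_sublist _ _).trans hCA, (take_sublist _ _).trans hCB, ?_, ?_⟩
  · rw [getLast?_eq_getElem?, length_take]
    have hmin : min (i+1) C.length = i + 1 := by omega
    rw [hmin]
    simp only [Nat.add_sub_cancel, getElem?_take, if_pos (Nat.lt_succ_self i)]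
    exact getElem?_eq_getElem hi
  · rw [length_take]; omega

lemma lvl_le {A B C : List α} (hA : A.Nodup) (hB : B.Nodup) (hlcs : IsLCS A B C) {i : ℕ}
    (hi : i < C.length) : lvl A B (C[i]) ≤ i + 1 := by
  have hne : {m | ∃ D : List α, D.Sublist A ∧ D.Sublist B ∧ D.getLast? = some (C[i]) ∧
      D.length = m}.Nonempty := by
    refine ⟨i + 1, C.take (i+1), (take_sublist _ _).trans hlcs.1,
      (take_sublist _ _).trans hlcs.2.1, ?_, ?_⟩
    · rw [getLast?_eq_getElem?, length_take]
      have hmin : min (i+1) C.length = i + 1 := by omega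
      rw [hmin]
      simp only [Nat.add_sub_cancel, getElem?_take, if_pos (Nat.lt_succ_self i)]
      exact getElem?_eq_getElem hi
    · rw [length_take]; omega
  apply csSup_le hne
  rintro n ⟨D, hDA, hDB, hDlast, rfl⟩
  have hsplit : (C[i] :: C.drop (i+1)).Sublist C := by
    rw [← drop_eq_getElem_cons hi]; exact drop_sublist _ _
  have hEA : (D ++ C.drop (i+1)).Sublist A := glue hA hDA hDlast (hsplit.trans hlcs.1)
  have hEB : (D ++ C.drop (i+1)).Sublist B := glue hB hDB hDlast (hsplit.trans hlcs.2.1)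
  have hle := hlcs.2.2 _ hEA hEB
  rw [length_append, length_drop] at hle
  omega

end LCS5

theorem stmt5 {α : Type*} (t : ℕ) (A B : List α) (hA : A.Nodup) (hB : B.Nodup)
    (h : A.length + B.length = t) :
    {C : List α | IsLCS A B C}.ncard ≤
      3 ^ ((t / 2 - 2 * ((-(t / 2 : ℤ)) % 3).toNat) / 3) * 2 ^ ((-(t / 2 : ℤ)) % 3).toNat := by
  classical
  have hz : ((-(t / 2 : ℤ)) % 3).toNat = (3 - (t/2) % 3) % 3 := by omega
  rw [hz]
  set n := t / 2 with hn
  set S := {C : List α | IsLCS A B C} with hSdef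
  by_cases hS : S.Nonempty
  · obtain ⟨C₀, hC₀⟩ := hS
    set L := C₀.length with hL
    have lens : ∀ C ∈ S, C.length = L :=
      fun C hC => le_antisymm (hC₀.2.2 C hC.1 hC.2.1) (hC.2.2 C₀ hC₀.1 hC₀.2.1)
    set Lv : Fin L → Finset α :=
      fun i => A.toFinset.filter (fun x => x ∈ B ∧ LCS5.lvl A B x = (i : ℕ) + 1) with hLv
    have hmemLv : ∀ C (hC : C ∈ S) (i : Fin L), C[(i:ℕ)]'(by rw [lens C hC]; exact i.2) ∈ Lv i := by
      intro C hC i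
      have hi : (i : ℕ) < C.length := by rw [lens C hC]; exact i.2
      rw [hLv, Finset.mem_filter]
      exact ⟨List.mem_toFinset.2 (hC.1.subset (C.getElem_mem hi)),
        hC.2.1.subset (C.getElem_mem hi),
        le_antisymm (LCS5.lvl_le hA hB hC hi) (LCS5.le_lvl hC.1 hC.2.1 hi)⟩
    -- injection
    have hcard : S.ncard ≤ ∏ i : Fin L, (Lv i).card := by
      rw [← Nat.card_coe_set_eq]
      have : Nat.card (∀ i : Fin L, {x // x ∈ Lv i}) = ∏ i : Fin L, (Lv i).card := by
        rw [Nat.card_pi]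
        congr 1; ext i
        rw [Nat.card_eq_fintype_card, Fintype.card_coe]
      rw [← this]
      apply Nat.card_le_card_of_injective
        (f := fun C : S => fun i : Fin L =>
          (⟨(C : List α)[(i:ℕ)]'(by rw [lens C C.2]; exact i.2), hmemLv C C.2 i⟩ : {x // x ∈ Lv i}))
      intro C C' hCC'
      ext1
      apply List.ext_getElem (by rw [lens _ C.2, lens _ C'.2])
      intro i hi hi'
      have hiL : i < L := by rw [← lens _ C.2]; exact hi
      exact congrArg Subtype.val (congrFun hCC' ⟨i, hiL⟩)
    -- sum of level sizes
    have hsum : ∑ i : Fin L, (Lv i).card ≤ n := by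
      have hdisj : ∀ i ∈ (Finset.univ : Finset (Fin L)), ∀ j ∈ Finset.univ, i ≠ j →
          Disjoint (Lv i) (Lv j) := by
        intro i _ j _ hij
        rw [Finset.disjoint_left]
        intro x hxi hxj
        rw [hLv, Finset.mem_filter] at hxi hxj
        exact hij (Fin.ext (by omega))
      rw [← Finset.card_biUnion hdisj]
      have hsub : (Finset.univ.biUnion Lv) ⊆ A.toFinset.filter (fun x => x ∈ B) := by
        intro x hx
        rw [Finset.mem_biUnion] at hx
        obtain ⟨i, _, hxi⟩ := hx
        rw [hLv, Finset.mem_filter] at hxi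
        rw [Finset.mem_filter]
        exact ⟨hxi.1, hxi.2.1⟩
      refine (Finset.card_le_card hsub).trans ?_
      have h1 : (A.toFinset.filter (fun x => x ∈ B)).card ≤ A.length := by
        rw [← List.toFinset_card_of_nodup hA]
        exact Finset.card_le_card (Finset.filter_subset _ _)
      have h2 : (A.toFinset.filter (fun x => x ∈ B)).card ≤ B.length := by
        rw [← List.toFinset_card_of_nodup hB]
        apply Finset.card_le_card
        intro x hx
        rw [Finset.mem_filter] at hx
        exact List.mem_toFinset.2 hx.2
      omega
    have hpos : ∀ i ∈ (Finset.univ : Finset (Fin L)), 1 ≤ (Lv i).card := by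
      intro i _
      exact Finset.card_pos.2 ⟨_, hmemLv C₀ hC₀ i⟩
    calc S.ncard ≤ ∏ i : Fin L, (Lv i).card := hcard
      _ ≤ LCS5.fmax (∑ i : Fin L, (Lv i).card) := LCS5.prod_le_fmax _ _ hpos
      _ ≤ LCS5.fmax n := LCS5.fmax_mono hsum
      _ ≤ _ := LCS5.fmax_le_bound n
  · rw [Set.not_nonempty_iff_eq_empty] at hS
    rw [hS]
    simp
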